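/- For the controlled SIR system with linear control term with initial data S(0) > 0 and I(0) > ε > 0, and for every τ ≥ 0, the trajectory driven by the delayed bang-bang control u(·;τ) has a well-defined eradication time: there exists T ≥ 0 such that I(T) = ε and I(t) > ε for all t ∈ [0, T). -/

import Mathlib

open MeasureTheory Set Filter Topology

/-- Trajectory of the SIR system with linear control term, in Carathéodory (integral) form:
`S' = -βSI - α₁uS`, `I' = βSI - μI - α₂uI` on `[0, ∞)`. -/
def IsLinTraj (β μ α₁ α₂ : ℝ) (u S I : ℝ → ℝ) : Prop :=
  ContinuousOn S (Set.Ici 0) ∧ ContinuousOn I (Set.Ici 0) ∧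
  (∀ t, 0 ≤ t → S t = S 0 + ∫ s in (0:ℝ)..t, (-(β * S s * I s) - α₁ * u s * S s)) ∧
  (∀ t, 0 ≤ t → I t = I 0 + ∫ s in (0:ℝ)..t, (β * S s * I s - μ * I s - α₂ * u s * I s))

/-- `T` is the eradication time: the first time at which `I` reaches the threshold `ε`. -/
def IsEradicationTime (I : ℝ → ℝ) (ε T : ℝ) : Prop :=
  0 ≤ T ∧ I T = ε ∧ ∀ t, 0 ≤ t → t < T → ε < I t

/-- The delayed bang-bang control `u(·;τ)`: no control before `τ`, maximal control after. -/
noncomputable def delayedControl (umax τ : ℝ) : ℝ → ℝ := fun t => if t < τ then 0 else umax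

/- ### Auxiliary lemmas -/

lemma delayedControl_nonneg {umax : ℝ} (h : 0 ≤ umax) (τ t : ℝ) :
    0 ≤ delayedControl umax τ t := by
  unfold delayedControl; split <;> simp [h]

lemma delayedControl_measurable (umax τ : ℝ) : Measurable (delayedControl umax τ) := by
  unfold delayedControl
  exact Measurable.ite (measurableSet_lt measurable_id measurable_const)
    measurable_const measurable_const

lemma delayedControl_rc (umax τ b : ℝ) :
    ContinuousWithinAt (delayedControl umax τ) (Ici b) b := by
  rcases lt_or_ge b τ with h | h
  · have hev : ∀ᶠ y in 𝓝[Ici b] b, delayedControl umax τ y = (0:ℝ) := by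
      filter_upwards [mem_nhdsWithin_of_mem_nhds (Iio_mem_nhds h)] with y hy
      simp [delayedControl, show y < τ from hy]
    have h0 : delayedControl umax τ b = 0 := by simp [delayedControl, h]
    exact (continuousWithinAt_const :
      ContinuousWithinAt (fun _ => (0:ℝ)) (Ici b) b).congr_of_eventuallyEq hev h0
  · have hev : ∀ᶠ y in 𝓝[Ici b] b, delayedControl umax τ y = umax := by
      filter_upwards [self_mem_nhdsWithin] with y hy
      simp [delayedControl, not_lt.2 (h.trans hy)]
    have h0 : delayedControl umax τ b = umax := by simp [delayedControl, not_lt.2 h]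
    exact (continuousWithinAt_const :
      ContinuousWithinAt (fun _ => umax) (Ici b) b).congr_of_eventuallyEq hev h0

lemma delayedControl_intervalIntegrable_mul {umax τ : ℝ} {F : ℝ → ℝ} {a b : ℝ}
    (hF : IntervalIntegrable F MeasureTheory.volume a b) :
    IntervalIntegrable (fun s => delayedControl umax τ s * F s) MeasureTheory.volume a b := by
  have heq : (fun s => delayedControl umax τ s * F s)
      = fun s => umax * (Set.Ici τ).indicator F s := by
    funext s
    by_cases h : s < τ
    · rw [Set.indicator_of_notMem (by simpa using not_le.2 h)]
      simp [delayedControl, h]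
    · rw [Set.indicator_of_mem (by simpa using not_lt.1 h)]
      simp [delayedControl, h]
  rw [heq, intervalIntegrable_iff] at *
  exact ((hF.indicator measurableSet_Ici).const_mul umax)

lemma smAtFilter {f : ℝ → ℝ} (hf : AEMeasurable f (MeasureTheory.volume.restrict (Set.Ici 0)))
    {x : ℝ} (hx : 0 ≤ x) :
    StronglyMeasurableAtFilter f (𝓝[>] x) MeasureTheory.volume :=
  ⟨Set.Ici 0, Filter.mem_of_superset self_mem_nhdsWithin
      (fun y hy => le_of_lt (lt_of_le_of_lt hx hy)), hf.aestronglyMeasurable⟩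

lemma primitive_right_deriv' {f : ℝ → ℝ} {x : ℝ}
    (hint : IntervalIntegrable f MeasureTheory.volume 0 x)
    (hmeas : StronglyMeasurableAtFilter f (𝓝[>] x) MeasureTheory.volume)
    (hc : ContinuousWithinAt f (Ici x) x) :
    HasDerivWithinAt (fun t => ∫ s in (0:ℝ)..t, f s) (f x) (Ici x) x :=
  intervalIntegral.integral_hasDerivWithinAt_right hint hmeas (hc.mono Ioi_subset_Ici_self)

/-- Positivity of solutions of scalar linear Carathéodory ODEs in integral form. -/
lemma pos_of_linear_integral
    (a F : ℝ → ℝ) (T : ℝ) (hT : 0 ≤ T)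
    (hFc : ContinuousOn F (Ici 0))
    (hF0 : 0 < F 0)
    (haint : IntervalIntegrable a MeasureTheory.volume 0 T)
    (haFint : IntervalIntegrable (fun s => a s * F s) MeasureTheory.volume 0 T)
    (hameas : ∀ x, 0 ≤ x → StronglyMeasurableAtFilter a (𝓝[>] x) MeasureTheory.volume)
    (haFmeas : ∀ x, 0 ≤ x →
      StronglyMeasurableAtFilter (fun s => a s * F s) (𝓝[>] x) MeasureTheory.volume)
    (harc : ∀ x, 0 ≤ x → ContinuousWithinAt a (Ici x) x)
    (hFeq : ∀ t, 0 ≤ t → F t = F 0 + ∫ s in (0:ℝ)..t, a s * F s) :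
    0 < F T := by
  set A : ℝ → ℝ := fun t => ∫ s in (0:ℝ)..t, a s with hA
  have hIccuIcc : Icc (0:ℝ) T = uIcc (0:ℝ) T := (uIcc_of_le hT).symm
  have hAc : ContinuousOn A (Icc 0 T) := by
    rw [hIccuIcc]
    exact intervalIntegral.continuousOn_primitive_interval
      (by rw [← hIccuIcc]; exact (intervalIntegrable_iff_integrableOn_Icc_of_le hT).1 haint)
  have hgc : ContinuousOn (fun t => F t * Real.exp (-A t)) (Icc 0 T) :=
    (hFc.mono Icc_subset_Ici_self).mul (Real.continuous_exp.comp_continuousOn hAc.neg)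
  have hderiv : ∀ x ∈ Ico 0 T, HasDerivWithinAt (fun t => F t * Real.exp (-A t)) 0 (Ici x) x := by
    intro x hx
    have hx0 : (0:ℝ) ≤ x := hx.1
    have hsub : uIcc (0:ℝ) x ⊆ uIcc (0:ℝ) T := by
      rw [uIcc_of_le hx0, uIcc_of_le hT]
      exact Icc_subset_Icc le_rfl hx.2.le
    have hA' : HasDerivWithinAt A (a x) (Ici x) x :=
      primitive_right_deriv' (haint.mono_set hsub) (hameas x hx0) (harc x hx0)
    have hFcw : ContinuousWithinAt F (Ici x) x :=
      (hFc.continuousWithinAt (by exact hx0)).mono (Ici_subset_Ici.2 hx0)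
    have hF' : HasDerivWithinAt F (a x * F x) (Ici x) x := by
      have h1 : HasDerivWithinAt (fun t => F 0 + ∫ s in (0:ℝ)..t, a s * F s)
          (a x * F x) (Ici x) x :=
        (primitive_right_deriv' (haFint.mono_set hsub) (haFmeas x hx0)
          ((harc x hx0).mul hFcw)).const_add (F 0)
      exact h1.congr (fun y hy => hFeq y (le_trans hx0 hy)) (hFeq x hx0)
    have hE : HasDerivWithinAt (fun t => Real.exp (-A t)) (Real.exp (-A x) * (-(a x)))
        (Ici x) x := hA'.neg.exp
    have := hF'.mul hE
    exact this.congr_deriv (by ring)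
  have hconst := constant_of_has_deriv_right_zero hgc hderiv T (right_mem_Icc.2 hT)
  have hA0 : A 0 = 0 := intervalIntegral.integral_same
  rw [hA0] at hconst
  simp only [neg_zero, Real.exp_zero, mul_one] at hconst
  have hexp := Real.exp_pos (-A T)
  nlinarith

/-- For the linear-control SIR system driven by any delayed bang-bang control `u(·;τ)`,
the eradication time is well defined: there is a first time `T` at which `I(T) = ε`. -/
theorem linear_delayed_control_eradication_time_exists
    (β μ umax α₁ α₂ ε τ : ℝ)
    (hβ : 0 < β) (hμ : 0 < μ) (humax : 0 < umax)
    (hα₁ : 0 ≤ α₁) (hα₂ : 0 ≤ α₂) (hα : ¬(α₁ = 0 ∧ α₂ = 0))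
    (hε : 0 < ε) (hτ : 0 ≤ τ)
    (S I : ℝ → ℝ)
    (htraj : IsLinTraj β μ α₁ α₂ (delayedControl umax τ) S I)
    (hS0 : 0 < S 0) (hI0 : ε < I 0) :
    ∃ T, IsEradicationTime I ε T := by
  classical
  obtain ⟨hScont, hIcont, hSeq, hIeq⟩ := htraj
  set u : ℝ → ℝ := delayedControl umax τ with hu_def
  have hu_nonneg : ∀ t, 0 ≤ u t := delayedControl_nonneg humax.le τ
  have hu_meas : Measurable u := delayedControl_measurable umax τ
  have hu_rc : ∀ b, ContinuousWithinAt u (Ici b) b := delayedControl_rc umax τ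
  have hSm : AEMeasurable S (volume.restrict (Ici 0)) := hScont.aemeasurable measurableSet_Ici
  have hIm : AEMeasurable I (volume.restrict (Ici 0)) := hIcont.aemeasurable measurableSet_Ici
  have hum : AEMeasurable u (volume.restrict (Ici 0)) := hu_meas.aemeasurable
  have hsub : ∀ {t : ℝ}, 0 ≤ t → uIcc (0:ℝ) t ⊆ Ici 0 := by
    intro t ht
    rw [uIcc_of_le ht]
    exact Icc_subset_Ici_self
  -- integrability of the integrand of the S equation
  have hfint : ∀ t, 0 ≤ t →
      IntervalIntegrable (fun s => -(β * S s * I s) - α₁ * u s * S s) volume 0 t := by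
    intro t ht
    have h1 : IntervalIntegrable (fun s => -(β * S s * I s)) volume 0 t :=
      (((continuousOn_const.mul (hScont.mono (hsub ht))).mul
        (hIcont.mono (hsub ht))).neg).intervalIntegrable
    have h2 : IntervalIntegrable (fun s => u s * (α₁ * S s)) volume 0 t :=
      delayedControl_intervalIntegrable_mul
        ((continuousOn_const.mul (hScont.mono (hsub ht))).intervalIntegrable)
    have h3 := h1.sub h2
    have heq : (fun s => -(β * S s * I s) - α₁ * u s * S s)
        = fun s => -(β * S s * I s) - u s * (α₁ * S s) := by
      funext s; ring
    rw [heq]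
    exact h3
  -- integrability of the integrand of the I equation
  have hgint : ∀ t, 0 ≤ t →
      IntervalIntegrable (fun s => β * S s * I s - μ * I s - α₂ * u s * I s) volume 0 t := by
    intro t ht
    have h1 : IntervalIntegrable (fun s => β * S s * I s - μ * I s) volume 0 t :=
      (((continuousOn_const.mul (hScont.mono (hsub ht))).mul (hIcont.mono (hsub ht))).sub
        (continuousOn_const.mul (hIcont.mono (hsub ht)))).intervalIntegrable
    have h2 : IntervalIntegrable (fun s => u s * (α₂ * I s)) volume 0 t :=
      delayedControl_intervalIntegrable_mul
        ((continuousOn_const.mul (hIcont.mono (hsub ht))).intervalIntegrable)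
    have h3 := h1.sub h2
    have heq : (fun s => β * S s * I s - μ * I s - α₂ * u s * I s)
        = fun s => (β * S s * I s - μ * I s) - u s * (α₂ * I s) := by
      funext s; ring
    rw [heq]
    exact h3
  -- positivity of S
  have hSpos : ∀ t, 0 ≤ t → 0 < S t := by
    intro t ht
    have haint : IntervalIntegrable (fun s => -(β * I s) - α₁ * u s) volume 0 t := by
      have h1 : IntervalIntegrable (fun s => -(β * I s)) volume 0 t :=
        ((continuousOn_const.mul (hIcont.mono (hsub ht))).neg).intervalIntegrable
      have h2 : IntervalIntegrable (fun s => u s * α₁) volume 0 t :=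
        delayedControl_intervalIntegrable_mul (intervalIntegrable_const)
      have h3 := h1.sub h2
      have heq : (fun s => -(β * I s) - α₁ * u s) = fun s => -(β * I s) - u s * α₁ := by
        funext s; ring
      rw [heq]; exact h3
    have hkey : (fun s => (-(β * I s) - α₁ * u s) * S s)
        = fun s => -(β * S s * I s) - α₁ * u s * S s := by
      funext s; ring
    have haFint : IntervalIntegrable (fun s => (-(β * I s) - α₁ * u s) * S s) volume 0 t := by
      rw [hkey]; exact hfint t ht
    have ham : AEMeasurable (fun s => -(β * I s) - α₁ * u s) (volume.restrict (Ici 0)) :=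
      ((hIm.const_mul β).neg).sub (hum.const_mul α₁)
    have harc : ∀ x, 0 ≤ x →
        ContinuousWithinAt (fun s => -(β * I s) - α₁ * u s) (Ici x) x := by
      intro x hx
      exact ((((hIcont.continuousWithinAt hx).mono
        (Ici_subset_Ici.2 hx)).const_mul β).neg).sub ((hu_rc x).const_mul α₁)
    refine pos_of_linear_integral (fun s => -(β * I s) - α₁ * u s) S t ht hScont hS0
      haint haFint (fun x hx => smAtFilter ham hx)
      (fun x hx => smAtFilter (ham.mul hSm) hx) harc ?_
    intro r hr
    rw [hSeq r hr, hkey]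
  -- there is a time at which I drops to ε
  have hexists : ∃ t, 0 ≤ t ∧ I t ≤ ε := by
    by_contra hno
    push_neg at hno
    have hμε : 0 < μ * ε := mul_pos hμ hε
    set t₀ : ℝ := (S 0 + I 0) / (μ * ε) with ht₀_def
    have ht₀ : 0 ≤ t₀ := div_nonneg (by nlinarith [hno 0 le_rfl]) hμε.le
    have hfi := hfint t₀ ht₀
    have hgi := hgint t₀ ht₀
    have hsum : S t₀ + I t₀ = (S 0 + I 0) + ∫ s in (0:ℝ)..t₀,
        ((-(β * S s * I s) - α₁ * u s * S s) + (β * S s * I s - μ * I s - α₂ * u s * I s)) := by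
      rw [intervalIntegral.integral_add hfi hgi, hSeq t₀ ht₀, hIeq t₀ ht₀]
      ring
    have hmono : (∫ s in (0:ℝ)..t₀,
        ((-(β * S s * I s) - α₁ * u s * S s) + (β * S s * I s - μ * I s - α₂ * u s * I s)))
        ≤ ∫ _s in (0:ℝ)..t₀, (-(μ * ε)) := by
      refine intervalIntegral.integral_mono_on ht₀ (hfi.add hgi) intervalIntegrable_const ?_
      intro s hs
      have hIs := hno s hs.1
      have hSs := hSpos s hs.1
      have hus := hu_nonneg s
      nlinarith [mul_nonneg (mul_nonneg hα₁ hus) hSs.le,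
        mul_nonneg (mul_nonneg hα₂ hus) (le_trans hε.le hIs.le)]
    have hconst : (∫ _s in (0:ℝ)..t₀, (-(μ * ε))) = (t₀ - 0) * (-(μ * ε)) := by
      rw [intervalIntegral.integral_const, smul_eq_mul]
    have hfin : μ * ε * t₀ = S 0 + I 0 := by
      rw [ht₀_def]; field_simp
    have h1 := hSpos t₀ ht₀
    have h2 := hno t₀ ht₀
    nlinarith [hsum, hmono, hconst]
  -- the first hitting time
  obtain ⟨t₁, ht₁0, ht₁⟩ := hexists
  set Aset : Set ℝ := Ici 0 ∩ I ⁻¹' Iic ε with hAset_def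
  have hclosed : IsClosed Aset :=
    hIcont.preimage_isClosed_of_isClosed isClosed_Ici isClosed_Iic
  have hne : Aset.Nonempty := ⟨t₁, ht₁0, ht₁⟩
  have hbdd : BddBelow Aset := ⟨0, fun x hx => hx.1⟩
  set T := sInf Aset with hT_def
  have hTA : T ∈ Aset := hclosed.csInf_mem hne hbdd
  have hT0 : (0:ℝ) ≤ T := hTA.1
  have hTle : I T ≤ ε := hTA.2
  have hlt : ∀ t, 0 ≤ t → t < T → ε < I t := by
    intro t ht htT
    by_contra hle
    push_neg at hle
    exact absurd (csInf_le hbdd ⟨ht, hle⟩) (not_le.2 htT)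
  have hIcc : ContinuousOn I (Icc 0 T) := hIcont.mono Icc_subset_Ici_self
  have hmem : ε ∈ Icc (I T) (I 0) := ⟨hTle, hI0.le⟩
  obtain ⟨c, hc, hcε⟩ := intermediate_value_Icc' hT0 hIcc hmem
  have hcT : c = T := by
    rcases lt_or_eq_of_le hc.2 with h | h
    · exact absurd hcε (ne_of_gt (hlt c hc.1 h))
    · exact h
  exact ⟨T, hT0, by rw [← hcT]; exact hcε, hlt⟩
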